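/- Let (t_n) be a family of linear maps on the tower of BMW algebras satisfying stabilization and inclusion (with d = δ). Then for ε = ±1 and u, v ∈ BMW_{n−1}: t_{n+1}(u s_n^ε s_{n−1}^{−ε} s_n^ε v) = a^{−ε} t_n(u s_{n−1}^{2ε} v). -/

import Mathlib

noncomputable section

open FreeAlgebra

/-- In the free algebra on generators `inl i ↦ s_i`, `inr i ↦ s_i⁻¹`, the element
`z·e_i = s_i⁻¹ - s_i + z·1`. -/
def BMWe (C : Type) [CommRing C] (z : Cˣ) {n : ℕ} (i : Fin n) :
    FreeAlgebra C (Fin n ⊕ Fin n) :=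
  ι C (Sum.inr i) - ι C (Sum.inl i) + (z : C) • 1

/-- Defining relations of the Birman–Murakami–Wenzl algebra with `n` generators
`s_1, …, s_n` (the paper's `BMW_{n+1}`), over a commutative ring `C` with invertible
parameters `a` and `z` (in the paper `z = q - q⁻¹`).  The relations involving
`e_i = (s_i⁻¹ - s_i)/z + 1` are written multiplied through by the unit `z`,
using `z·e_i = s_i⁻¹ - s_i + z·1`, which is equivalent since `z` is invertible. -/
inductive BMWRel (C : Type) [CommRing C] (a z : Cˣ) (n : ℕ) :
    FreeAlgebra C (Fin n ⊕ Fin n) → FreeAlgebra C (Fin n ⊕ Fin n) → Prop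
  | mul_inv (i : Fin n) :
      BMWRel C a z n (ι C (Sum.inl i) * ι C (Sum.inr i)) 1
  | inv_mul (i : Fin n) :
      BMWRel C a z n (ι C (Sum.inr i) * ι C (Sum.inl i)) 1
  | comm (i j : Fin n) (h : (i : ℕ) + 2 ≤ (j : ℕ)) :
      BMWRel C a z n (ι C (Sum.inl i) * ι C (Sum.inl j))
        (ι C (Sum.inl j) * ι C (Sum.inl i))
  | braid (i j : Fin n) (h : (j : ℕ) = (i : ℕ) + 1) :
      BMWRel C a z n (ι C (Sum.inl i) * ι C (Sum.inl j) * ι C (Sum.inl i))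
        (ι C (Sum.inl j) * ι C (Sum.inl i) * ι C (Sum.inl j))
  | es (i : Fin n) :
      BMWRel C a z n (BMWe C z i * ι C (Sum.inl i)) (((a⁻¹ : Cˣ) : C) • BMWe C z i)
  | ese (i j : Fin n) (h : (j : ℕ) = (i : ℕ) + 1) :
      BMWRel C a z n (BMWe C z i * ι C (Sum.inl j) * BMWe C z i)
        (((z : C) * (a : C)) • BMWe C z i)
  | esinve (i j : Fin n) (h : (j : ℕ) = (i : ℕ) + 1) :
      BMWRel C a z n (BMWe C z i * ι C (Sum.inr j) * BMWe C z i)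
        (((z : C) * ((a⁻¹ : Cˣ) : C)) • BMWe C z i)

/-- The Birman–Murakami–Wenzl algebra with `n` generators (the paper's `BMW_{n+1}`). -/
abbrev BMW (C : Type) [CommRing C] (a z : Cˣ) (n : ℕ) : Type :=
  RingQuot (BMWRel C a z n)

variable {C : Type} [CommRing C] {a z : Cˣ} {n : ℕ}

/-- The generator `s_{i+1}`. -/
def BMW.S (i : Fin n) : BMW C a z n :=
  RingQuot.mkAlgHom C (BMWRel C a z n) (ι C (Sum.inl i))

/-- The inverse generator `s_{i+1}⁻¹`. -/
def BMW.Sinv (i : Fin n) : BMW C a z n :=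
  RingQuot.mkAlgHom C (BMWRel C a z n) (ι C (Sum.inr i))

/-- The element `e_{i+1} = (s_{i+1}⁻¹ - s_{i+1})/z + 1`. -/
def BMW.e (i : Fin n) : BMW C a z n :=
  ((z⁻¹ : Cˣ) : C) • (BMW.Sinv i - BMW.S i) + 1

lemma BMW.S_mul_Sinv (i : Fin n) : BMW.S (a := a) (z := z) i * BMW.Sinv i = 1 := by
  have := RingQuot.mkAlgHom_rel C (BMWRel.mul_inv (C := C) (a := a) (z := z) i)
  simp only [map_mul, map_one] at this
  exact this

lemma BMW.Sinv_mul_S (i : Fin n) : BMW.Sinv (a := a) (z := z) i * BMW.S i = 1 := by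
  have := RingQuot.mkAlgHom_rel C (BMWRel.inv_mul (C := C) (a := a) (z := z) i)
  simp only [map_mul, map_one] at this
  exact this

/-- The generator `s_{i+1}` as a unit. -/
def BMW.sU (i : Fin n) : (BMW C a z n)ˣ :=
  ⟨BMW.S i, BMW.Sinv i, BMW.S_mul_Sinv i, BMW.Sinv_mul_S i⟩

lemma BMW.S_comm (i j : Fin n) (h : (i : ℕ) + 2 ≤ (j : ℕ)) :
    BMW.S (a := a) (z := z) i * BMW.S j = BMW.S j * BMW.S i := by
  have := RingQuot.mkAlgHom_rel C (BMWRel.comm (C := C) (a := a) (z := z) i j h)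
  simp only [map_mul] at this
  exact this

lemma BMW.S_braid (i j : Fin n) (h : (j : ℕ) = (i : ℕ) + 1) :
    BMW.S (a := a) (z := z) i * BMW.S j * BMW.S i = BMW.S j * BMW.S i * BMW.S j := by
  have := RingQuot.mkAlgHom_rel C (BMWRel.braid (C := C) (a := a) (z := z) i j h)
  simp only [map_mul] at this
  exact this

/-- The image of `z·e_i` in the BMW algebra. -/
lemma BMW.mk_BMWe (i : Fin n) :
    RingQuot.mkAlgHom C (BMWRel C a z n) (BMWe C z i)
      = BMW.Sinv i - BMW.S i + (z : C) • 1 := by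
  simp only [BMWe, map_add, map_sub, map_smul, map_one]
  rfl

lemma BMW.Es (i : Fin n) :
    (BMW.Sinv (a := a) (z := z) i - BMW.S i + (z : C) • 1) * BMW.S i
      = ((a⁻¹ : Cˣ) : C) • (BMW.Sinv i - BMW.S i + (z : C) • 1) := by
  have := RingQuot.mkAlgHom_rel C (BMWRel.es (C := C) (a := a) (z := z) i)
  simp only [map_mul, map_smul, BMW.mk_BMWe] at this
  exact this

lemma BMW.EsE (i j : Fin n) (h : (j : ℕ) = (i : ℕ) + 1) :
    (BMW.Sinv (a := a) (z := z) i - BMW.S i + (z : C) • 1) * BMW.S j *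
        (BMW.Sinv i - BMW.S i + (z : C) • 1)
      = ((z : C) * (a : C)) • (BMW.Sinv i - BMW.S i + (z : C) • 1) := by
  have := RingQuot.mkAlgHom_rel C (BMWRel.ese (C := C) (a := a) (z := z) i j h)
  simp only [map_mul, map_smul, BMW.mk_BMWe] at this
  exact this

lemma BMW.EsinvE (i j : Fin n) (h : (j : ℕ) = (i : ℕ) + 1) :
    (BMW.Sinv (a := a) (z := z) i - BMW.S i + (z : C) • 1) * BMW.Sinv j *
        (BMW.Sinv i - BMW.S i + (z : C) • 1)
      = ((z : C) * ((a⁻¹ : Cˣ) : C)) • (BMW.Sinv i - BMW.S i + (z : C) • 1) := by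
  have := RingQuot.mkAlgHom_rel C (BMWRel.esinve (C := C) (a := a) (z := z) i j h)
  simp only [map_mul, map_smul, BMW.mk_BMWe] at this
  exact this

/-- The natural embedding `BMW_{m+1} → BMW_{n+1}` (`ι` iterated). -/
def BMW.ιle {m n : ℕ} (h : m ≤ n) : BMW C a z m →ₐ[C] BMW C a z n :=
  RingQuot.liftAlgHom C ⟨FreeAlgebra.lift C
      (Sum.elim (fun i => BMW.S (Fin.castLE h i)) (fun i => BMW.Sinv (Fin.castLE h i))), by
    rintro x y hxy
    induction hxy with
    | mul_inv i =>
        simp only [map_mul, map_one, FreeAlgebra.lift_ι_apply, Sum.elim_inl, Sum.elim_inr]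
        exact BMW.S_mul_Sinv _
    | inv_mul i =>
        simp only [map_mul, map_one, FreeAlgebra.lift_ι_apply, Sum.elim_inl, Sum.elim_inr]
        exact BMW.Sinv_mul_S _
    | comm i j hij =>
        simp only [map_mul, FreeAlgebra.lift_ι_apply, Sum.elim_inl]
        exact BMW.S_comm _ _ (by simpa using hij)
    | braid i j hij =>
        simp only [map_mul, FreeAlgebra.lift_ι_apply, Sum.elim_inl]
        exact BMW.S_braid _ _ (by simpa using hij)
    | es i =>
        simp only [BMWe, map_mul, map_add, map_sub, map_one, map_smul,
          FreeAlgebra.lift_ι_apply, Sum.elim_inl, Sum.elim_inr]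
        exact BMW.Es _
    | ese i j hij =>
        simp only [BMWe, map_mul, map_add, map_sub, map_one, map_smul,
          FreeAlgebra.lift_ι_apply, Sum.elim_inl, Sum.elim_inr]
        exact BMW.EsE _ _ (by simpa using hij)
    | esinve i j hij =>
        simp only [BMWe, map_mul, map_add, map_sub, map_one, map_smul,
          FreeAlgebra.lift_ι_apply, Sum.elim_inl, Sum.elim_inr]
        exact BMW.EsinvE _ _ (by simpa using hij)⟩


/-- A family of linear maps on the tower of BMW algebras satisfying the (positive and
negative) stabilization property and the inclusion property with parameter `d`. -/
def IsBMWStabIncl {C : Type} [CommRing C] (a z : Cˣ) (d : C)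
    (t : ∀ m : ℕ, BMW C a z m →ₗ[C] C) : Prop :=
  (∀ (m : ℕ) (u v : BMW C a z m),
    t (m + 1) (BMW.ιle (Nat.le_succ m) u * BMW.S (Fin.last m) *
        BMW.ιle (Nat.le_succ m) v) = (a : C) * t m (u * v)) ∧
  (∀ (m : ℕ) (u v : BMW C a z m),
    t (m + 1) (BMW.ιle (Nat.le_succ m) u * BMW.Sinv (Fin.last m) *
        BMW.ιle (Nat.le_succ m) v) = ((a⁻¹ : Cˣ) : C) * t m (u * v)) ∧
  (∀ (m : ℕ) (u : BMW C a z m),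
    t (m + 1) (BMW.ιle (Nat.le_succ m) u) = d * t m u)

section Aux

variable {C : Type} [CommRing C] {a z : Cˣ} {n : ℕ}

namespace BMW

lemma S_Sinv_cancel (k : Fin n) (x : BMW C a z n) :
    S (a := a) (z := z) k * (Sinv k * x) = x := by
  rw [← mul_assoc, S_mul_Sinv, one_mul]

lemma Sinv_S_cancel (k : Fin n) (x : BMW C a z n) :
    Sinv (a := a) (z := z) k * (S k * x) = x := by
  rw [← mul_assoc, Sinv_mul_S, one_mul]

/-- The element `z • e_k`. -/
def Ee (k : Fin n) : BMW C a z n := Sinv k - S k + (z : C) • 1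

lemma Ee_mul (k : Fin n) (x : BMW C a z n) :
    Ee (a := a) k * x = Sinv k * x - S k * x + (z : C) • x := by
  simp [Ee, sub_mul, add_mul, smul_mul_assoc]

lemma mul_Ee (k : Fin n) (x : BMW C a z n) :
    x * Ee (a := a) k = x * Sinv k - x * S k + (z : C) • x := by
  simp [Ee, mul_sub, mul_add, mul_smul_comm]

lemma S_eq (k : Fin n) :
    S (a := a) (z := z) k = Sinv k + (z : C) • 1 - Ee k := by
  simp [Ee]

lemma Ee_mul_S (k : Fin n) :
    Ee (a := a) (z := z) k * S k = ((a⁻¹ : Cˣ) : C) • Ee k := BMW.Es k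

lemma S_mul_Ee (k : Fin n) :
    S (a := a) (z := z) k * Ee k = ((a⁻¹ : Cˣ) : C) • Ee k := by
  have h : S (a := a) (z := z) k * Ee k = Ee k * S k := by
    simp only [Ee, mul_sub, sub_mul, mul_add, add_mul, mul_smul_comm, smul_mul_assoc,
      mul_one, one_mul, S_mul_Sinv, Sinv_mul_S]
  rw [h, Ee_mul_S]

lemma Ee_mul_Sinv (k : Fin n) :
    Ee (a := a) (z := z) k * Sinv k = (a : C) • Ee k := by
  have h := congrArg (fun x => x * Sinv (a := a) (z := z) k) (Ee_mul_S k)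
  simp only [smul_mul_assoc, mul_assoc, S_mul_Sinv, mul_one] at h
  have h2 := congrArg (fun x => (a : C) • x) h
  simp only [smul_smul, Units.mul_inv, one_smul] at h2
  exact h2.symm

lemma Sinv_mul_Ee (k : Fin n) :
    Sinv (a := a) (z := z) k * Ee k = (a : C) • Ee k := by
  have h : Sinv (a := a) (z := z) k * Ee k = Ee k * Sinv k := by
    simp only [Ee, mul_sub, sub_mul, mul_add, add_mul, mul_smul_comm, smul_mul_assoc,
      mul_one, one_mul, S_mul_Sinv, Sinv_mul_S]
  rw [h, Ee_mul_Sinv]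

lemma Sinv_Ee_cancel (k : Fin n) (x : BMW C a z n) :
    Sinv (a := a) (z := z) k * (Ee k * x) = (a : C) • (Ee k * x) := by
  rw [← mul_assoc, Sinv_mul_Ee, smul_mul_assoc]

lemma S_Ee_cancel (k : Fin n) (x : BMW C a z n) :
    S (a := a) (z := z) k * (Ee k * x) = ((a⁻¹ : Cˣ) : C) • (Ee k * x) := by
  rw [← mul_assoc, S_mul_Ee, smul_mul_assoc]

/-- skein square relations -/
lemma sqS_rel (k : Fin n) :
    1 - S (a := a) (z := z) k * S k + (z : C) • S k
      = ((a⁻¹ : Cˣ) : C) • Sinv k - ((a⁻¹ : Cˣ) : C) • S k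
        + (((a⁻¹ : Cˣ) : C) * (z : C)) • (1 : BMW C a z n) := by
  have h := S_mul_Ee (a := a) (z := z) k
  simp only [Ee, mul_sub, mul_add, mul_smul_comm, mul_one, S_mul_Sinv,
    smul_sub, smul_add, smul_smul] at h
  exact h

lemma sqSinv_rel (k : Fin n) :
    Sinv (a := a) (z := z) k * Sinv k - 1 + (z : C) • Sinv k
      = (a : C) • Sinv k - (a : C) • S k + ((a : C) * (z : C)) • (1 : BMW C a z n) := by
  have h := Ee_mul_Sinv (a := a) (z := z) k
  simp only [Ee, sub_mul, add_mul, smul_mul_assoc, one_mul, Sinv_mul_S, S_mul_Sinv,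
    smul_sub, smul_add, smul_smul] at h
  exact h

end BMW

end Aux
section Aux2

variable {C : Type} [CommRing C] {a z : Cˣ} {n : ℕ}

namespace BMW

lemma val_sU (k : Fin n) : ((sU (a := a) (z := z) k : (BMW C a z n)ˣ) : BMW C a z n) = S k := rfl

lemma val_sU_inv (k : Fin n) :
    (((sU (a := a) (z := z) k)⁻¹ : (BMW C a z n)ˣ) : BMW C a z n) = Sinv k := rfl

lemma mul3_ext {R : Type} [Monoid R] {a b c d e f : R} (h : a*(b*c) = d*(e*f)) (x : R) :
    a*(b*(c*x)) = d*(e*(f*x)) := by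
  have h' : a*b*c = d*e*f := by rw [mul_assoc, h, ← mul_assoc]
  simp only [← mul_assoc]
  rw [h']

section Braid

variable (i j : Fin n)

lemma sU_braid (hij : (j : ℕ) = (i : ℕ) + 1) : sU (a := a) (z := z) i * sU j * sU i = sU j * sU i * sU j := by
  apply Units.ext
  simpa [Units.val_mul, val_sU] using S_braid i j hij

lemma ebr (hij : (j : ℕ) = (i : ℕ) + 1) : S (a := a) (z := z) i * (S j * S i) = S j * (S i * S j) := by
  simpa [Units.val_mul, val_sU, mul_assoc] using congrArg Units.val (sU_braid (a:=a) (z:=z) i j hij)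

lemma e1 (hij : (j : ℕ) = (i : ℕ) + 1) :
    S (a := a) (z := z) j * (Sinv i * Sinv j) = Sinv i * (Sinv j * S i) := by
  have hb := sU_braid (a := a) (z := z) i j hij
  have h2 : sU (a := a) (z := z) j * (sU i * (sU j)⁻¹) = (sU i)⁻¹ * (sU j * sU i) := by
    calc sU (a := a) (z := z) j * (sU i * (sU j)⁻¹)
        = (sU i)⁻¹ * (sU i * sU j * sU i) * (sU j)⁻¹ := by group
      _ = (sU i)⁻¹ * (sU j * sU i * sU j) * (sU j)⁻¹ := by rw [hb]
      _ = (sU i)⁻¹ * (sU j * sU i) := by group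
  have hu : sU (a := a) (z := z) j * ((sU i)⁻¹ * (sU j)⁻¹) = (sU i)⁻¹ * ((sU j)⁻¹ * sU i) := by
    calc sU (a := a) (z := z) j * ((sU i)⁻¹ * (sU j)⁻¹)
        = (sU j * (sU i * (sU j)⁻¹))⁻¹ := by group
      _ = ((sU i)⁻¹ * (sU j * sU i))⁻¹ := by rw [h2]
      _ = (sU i)⁻¹ * ((sU j)⁻¹ * sU i) := by group
  simpa [Units.val_mul, val_sU, val_sU_inv] using congrArg Units.val hu

lemma e2 (hij : (j : ℕ) = (i : ℕ) + 1) : S (a := a) (z := z) j * (S i * Sinv j) = Sinv i * (S j * S i) := by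
  have hb := sU_braid (a := a) (z := z) i j hij
  have hu : sU (a := a) (z := z) j * (sU i * (sU j)⁻¹) = (sU i)⁻¹ * (sU j * sU i) := by
    calc sU (a := a) (z := z) j * (sU i * (sU j)⁻¹)
        = (sU i)⁻¹ * (sU i * sU j * sU i) * (sU j)⁻¹ := by group
      _ = (sU i)⁻¹ * (sU j * sU i * sU j) * (sU j)⁻¹ := by rw [hb]
      _ = (sU i)⁻¹ * (sU j * sU i) := by group
  simpa [Units.val_mul, val_sU, val_sU_inv] using congrArg Units.val hu

lemma e3 (hij : (j : ℕ) = (i : ℕ) + 1) : Sinv (a := a) (z := z) j * (Sinv i * S j) = S i * (Sinv j * Sinv i) := by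
  have hb := sU_braid (a := a) (z := z) i j hij
  have hu : (sU (a := a) (z := z) j)⁻¹ * ((sU i)⁻¹ * sU j) = sU i * ((sU j)⁻¹ * (sU i)⁻¹) := by
    calc (sU (a := a) (z := z) j)⁻¹ * ((sU i)⁻¹ * sU j)
        = sU i * (sU i * sU j * sU i)⁻¹ * sU j := by group
      _ = sU i * (sU j * sU i * sU j)⁻¹ * sU j := by rw [hb]
      _ = sU i * ((sU j)⁻¹ * (sU i)⁻¹) := by group
  simpa [Units.val_mul, val_sU, val_sU_inv] using congrArg Units.val hu

lemma e4 (hij : (j : ℕ) = (i : ℕ) + 1) : Sinv (a := a) (z := z) j * (S i * S j) = S i * (S j * Sinv i) := by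
  have hb := sU_braid (a := a) (z := z) i j hij
  have hu : (sU (a := a) (z := z) j)⁻¹ * (sU i * sU j) = sU i * (sU j * (sU i)⁻¹) := by
    calc (sU (a := a) (z := z) j)⁻¹ * (sU i * sU j)
        = (sU j)⁻¹ * (sU i * sU j * sU i) * (sU i)⁻¹ := by group
      _ = (sU j)⁻¹ * (sU j * sU i * sU j) * (sU i)⁻¹ := by rw [hb]
      _ = sU i * (sU j * (sU i)⁻¹) := by group
  simpa [Units.val_mul, val_sU, val_sU_inv] using congrArg Units.val hu

lemma e5 (hij : (j : ℕ) = (i : ℕ) + 1) : Sinv (a := a) (z := z) j * (Sinv i * Sinv j) = Sinv i * (Sinv j * Sinv i) := by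
  have hb := sU_braid (a := a) (z := z) i j hij
  have hu : (sU (a := a) (z := z) j)⁻¹ * ((sU i)⁻¹ * (sU j)⁻¹)
      = (sU i)⁻¹ * ((sU j)⁻¹ * (sU i)⁻¹) := by
    calc (sU (a := a) (z := z) j)⁻¹ * ((sU i)⁻¹ * (sU j)⁻¹)
        = (sU j * sU i * sU j)⁻¹ := by group
      _ = (sU i * sU j * sU i)⁻¹ := by rw [← hb]
      _ = (sU i)⁻¹ * ((sU j)⁻¹ * (sU i)⁻¹) := by group
  simpa [Units.val_mul, val_sU, val_sU_inv] using congrArg Units.val hu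

lemma e3' (hij : (j : ℕ) = (i : ℕ) + 1) (x : BMW C a z n) :
    Sinv (a := a) (z := z) j * (Sinv i * (S j * x)) = S i * (Sinv j * (Sinv i * x)) :=
  mul3_ext (e3 i j hij) x

lemma e4' (hij : (j : ℕ) = (i : ℕ) + 1) (x : BMW C a z n) :
    Sinv (a := a) (z := z) j * (S i * (S j * x)) = S i * (S j * (Sinv i * x)) :=
  mul3_ext (e4 i j hij) x

lemma EsE_Ee (hij : (j : ℕ) = (i : ℕ) + 1) : Ee (a := a) (z := z) i * (S j * Ee i) = ((z : C) * (a : C)) • Ee i := by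
  have h : Ee (a := a) (z := z) i * S j * Ee i = ((z : C) * (a : C)) • Ee i := BMW.EsE i j hij
  rw [mul_assoc] at h; exact h

lemma EsinvE_Ee (hij : (j : ℕ) = (i : ℕ) + 1) :
    Ee (a := a) (z := z) i * (Sinv j * Ee i) = ((z : C) * ((a⁻¹ : Cˣ) : C)) • Ee i := by
  have h : Ee (a := a) (z := z) i * Sinv j * Ee i = ((z : C) * ((a⁻¹ : Cˣ) : C)) • Ee i :=
    BMW.EsinvE i j hij
  rw [mul_assoc] at h; exact h

lemma keyL (hij : (j : ℕ) = (i : ℕ) + 1) : S (a := a) (z := z) i * (S j * Ee i) = Sinv i * (Sinv j * Ee i) := by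
  have hAAi : (a : C) * ((a⁻¹ : Cˣ) : C) = 1 := Units.mul_inv a
  have L1 : Sinv (a := a) (z := z) j * (Ee i * (S j * Ee i))
      = ((z : C) * (a : C)) • (Sinv j * Ee i) := by
    rw [EsE_Ee i j hij, mul_smul_comm]
  rw [Ee_mul i (S j * Ee i), mul_add, mul_sub, mul_smul_comm, Sinv_S_cancel,
    e3' i j hij (Ee i), e4' i j hij (Ee i), Sinv_mul_Ee] at L1
  simp only [mul_smul_comm] at L1
  -- L1 : (a)•(S i*(Sinv j*Ee i)) - (a)•(S i*(S j*Ee i)) + z•(Ee i) = (z*a)•(Sinv j*Ee i)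
  have hV2 : S (a := a) (z := z) i * (Sinv j * Ee i)
      = Sinv i * (Sinv j * Ee i) + (z : C) • (Sinv j * Ee i)
        - ((z : C) * ((a⁻¹ : Cˣ) : C)) • Ee i := by
    conv_lhs => rw [S_eq i]
    rw [sub_mul, add_mul, smul_mul_assoc, one_mul, EsinvE_Ee i j hij]
  rw [hV2, smul_sub, smul_add, smul_smul, smul_smul] at L1
  rw [show (a : C) * ((z : C) * ((a⁻¹ : Cˣ) : C)) = (z : C) by
    linear_combination (z : C) * hAAi] at L1
  rw [show (a : C) * (z : C) = (z : C) * (a : C) from mul_comm _ _] at L1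
  have L4 : (a : C) • (Sinv (a := a) (z := z) i * (Sinv j * Ee i))
      = (a : C) • (S i * (S j * Ee i)) := by
    linear_combination (norm := abel) L1
  have h5 := congrArg (fun x => ((a⁻¹ : Cˣ) : C) • x) L4
  simp only [smul_smul, Units.inv_mul, one_smul] at h5
  exact h5.symm


lemma keyL2 (hij : (j : ℕ) = (i : ℕ) + 1) :
    S (a := a) (z := z) j * Ee i = Sinv i * (Sinv i * (Sinv j * Ee i)) := by
  have h := congrArg (fun x => Sinv (a := a) (z := z) i * x) (keyL i j hij)
  simpa only [Sinv_S_cancel] using h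

lemma keyL2' (hij : (j : ℕ) = (i : ℕ) + 1) :
    Sinv (a := a) (z := z) j * Ee i = S i * (S i * (S j * Ee i)) := by
  have h := congrArg (fun x => S (a := a) (z := z) i * x) (keyL i j hij)
  simp only [S_Sinv_cancel] at h
  exact h.symm

lemma hintP (hij : (j : ℕ) = (i : ℕ) + 1) :
    S (a := a) (z := z) j * (Sinv i * S j) - S i * (S j * S i) + (z : C) • (S j * S j)
      = Sinv i * (Sinv j * Sinv i) - Sinv i * (S j * Sinv i) + (z : C) • (Sinv i * Sinv i) := by
  have h := congrArg (fun x => x * S (a := a) (z := z) j) (keyL2 i j hij)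
  simp only [mul_assoc] at h
  rw [Ee_mul i (S j)] at h
  simp only [mul_add, mul_sub, mul_smul_comm] at h
  rw [e3 i j hij, e4 i j hij, Sinv_mul_S] at h
  simp only [Sinv_S_cancel, mul_one] at h
  rw [← ebr i j hij] at h
  exact h

lemma hintM (hij : (j : ℕ) = (i : ℕ) + 1) :
    Sinv (a := a) (z := z) j * (Sinv i * Sinv j) - Sinv j * (S i * Sinv j)
        + (z : C) • (Sinv j * Sinv j)
      = S i * (Sinv j * S i) - S i * (S j * S i) + (z : C) • (S i * S i) := by
  have h := congrArg (fun x => x * Sinv (a := a) (z := z) j) (keyL2' i j hij)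
  simp only [mul_assoc] at h
  rw [Ee_mul i (Sinv j)] at h
  simp only [mul_add, mul_sub, mul_smul_comm] at h
  rw [e1 i j hij, e2 i j hij, S_mul_Sinv] at h
  simp only [S_Sinv_cancel, mul_one] at h
  exact h

end Braid

end BMW

end Aux2
section Aux3

variable {C : Type} [CommRing C] {a z : Cˣ}

namespace BMW

lemma ιle_S {m n : ℕ} (h : m ≤ n) (i : Fin m) :
    ιle (C := C) (a := a) (z := z) h (S i) = S (Fin.castLE h i) := by
  rw [BMW.S, BMW.ιle, RingQuot.liftAlgHom_mkAlgHom_apply, FreeAlgebra.lift_ι_apply]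
  rfl

lemma ιle_Sinv {m n : ℕ} (h : m ≤ n) (i : Fin m) :
    ιle (C := C) (a := a) (z := z) h (Sinv i) = Sinv (Fin.castLE h i) := by
  rw [BMW.Sinv, BMW.ιle, RingQuot.liftAlgHom_mkAlgHom_apply, FreeAlgebra.lift_ι_apply]
  rfl

lemma ιle_ιle {k l m : ℕ} (h1 : k ≤ l) (h2 : l ≤ m) (x : BMW C a z k) :
    ιle (a := a) (z := z) h2 (ιle h1 x) = ιle (h1.trans h2) x := by
  have key : (ιle (C := C) (a := a) (z := z) h2).comp (ιle h1) = ιle (h1.trans h2) := by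
    apply RingQuot.ringQuot_ext'
    apply FreeAlgebra.hom_ext
    funext g
    rcases g with i | i
    · show ιle (C := C) (a := a) (z := z) h2 (ιle h1 (S i)) = ιle (h1.trans h2) (S i)
      rw [ιle_S, ιle_S, ιle_S]
      rfl
    · show ιle (C := C) (a := a) (z := z) h2 (ιle h1 (Sinv i)) = ιle (h1.trans h2) (Sinv i)
      rw [ιle_Sinv, ιle_Sinv, ιle_Sinv]
      rfl
  exact DFunLike.congr_fun key x

end BMW

end Aux3
section Aux4

lemma bmw_zigzag_aux {C : Type} [CommRing C] (a z : Cˣ) (d : C)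
    (hzd : (z : C) * d = (a : C) - ((a⁻¹ : Cˣ) : C) + (z : C))
    (t : ∀ m : ℕ, BMW C a z m →ₗ[C] C) (ht : IsBMWStabIncl a z d t)
    (m : ℕ) (u v : BMW C a z m) :
    (t (m + 2) (BMW.ιle (Nat.le_add_right m 2) u *
        (BMW.S (⟨m + 1, Nat.lt_succ_self (m + 1)⟩ : Fin (m + 2)) * BMW.Sinv (⟨m, Nat.lt_succ_of_lt (Nat.lt_succ_self m)⟩ : Fin (m + 2)) *
          BMW.S (⟨m + 1, Nat.lt_succ_self (m + 1)⟩ : Fin (m + 2))) * BMW.ιle (Nat.le_add_right m 2) v)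
      = ((a⁻¹ : Cˣ) : C) * t (m + 1) (BMW.ιle (Nat.le_succ m) u *
          (BMW.S (⟨m, Nat.lt_succ_self m⟩ : Fin (m + 1)) * BMW.S (⟨m, Nat.lt_succ_self m⟩ : Fin (m + 1))) *
          BMW.ιle (Nat.le_succ m) v))
    ∧ (t (m + 2) (BMW.ιle (Nat.le_add_right m 2) u *
        (BMW.Sinv (⟨m + 1, Nat.lt_succ_self (m + 1)⟩ : Fin (m + 2)) * BMW.S (⟨m, Nat.lt_succ_of_lt (Nat.lt_succ_self m)⟩ : Fin (m + 2)) *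
          BMW.Sinv (⟨m + 1, Nat.lt_succ_self (m + 1)⟩ : Fin (m + 2))) * BMW.ιle (Nat.le_add_right m 2) v)
      = (a : C) * t (m + 1) (BMW.ιle (Nat.le_succ m) u *
          (BMW.Sinv (⟨m, Nat.lt_succ_self m⟩ : Fin (m + 1)) * BMW.Sinv (⟨m, Nat.lt_succ_self m⟩ : Fin (m + 1))) *
          BMW.ιle (Nat.le_succ m) v)) := by
  obtain ⟨hsP, hsN, hI⟩ := ht
  have hAAi : (a : C) * ((a⁻¹ : Cˣ) : C) = 1 := Units.mul_inv a
  set i2 : Fin (m + 2) := ⟨m, by omega⟩ with hi2def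
  set j2 : Fin (m + 2) := ⟨m + 1, by omega⟩ with hj2def
  set i1 : Fin (m + 1) := ⟨m, by omega⟩ with hi1def
  have hij2 : (j2 : ℕ) = (i2 : ℕ) + 1 := rfl
  set u1 : BMW C a z (m + 1) := BMW.ιle (Nat.le_succ m) u with hu1def
  set v1 : BMW C a z (m + 1) := BMW.ιle (Nat.le_succ m) v with hv1def
  set p : BMW C a z (m + 1) := BMW.S i1 with hpdef
  set pi : BMW C a z (m + 1) := BMW.Sinv i1 with hpidef
  set P : BMW C a z (m + 2) := BMW.S i2 with hPdef
  set Pi : BMW C a z (m + 2) := BMW.Sinv i2 with hPidef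
  set Q : BMW C a z (m + 2) := BMW.S j2 with hQdef
  set Qi : BMW C a z (m + 2) := BMW.Sinv j2 with hQidef
  set U : BMW C a z (m + 2) := BMW.ιle (Nat.le_add_right m 2) u with hUdef
  set V : BMW C a z (m + 2) := BMW.ιle (Nat.le_add_right m 2) v with hVdef
  set τ : C := t m (u * v) with hτdef
  have hU : U = BMW.ιle (Nat.le_succ (m + 1)) u1 := (BMW.ιle_ιle _ _ u).symm
  have hV : V = BMW.ιle (Nat.le_succ (m + 1)) v1 := (BMW.ιle_ιle _ _ v).symm
  have hp : BMW.ιle (Nat.le_succ (m + 1)) p = P := BMW.ιle_S _ i1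
  have hpi : BMW.ιle (Nat.le_succ (m + 1)) pi = Pi := BMW.ιle_Sinv _ i1
  -- level m+1 values
  have hτ0 : t (m + 1) (u1 * v1) = d * τ := by
    rw [hu1def, hv1def, ← map_mul]; exact hI m (u * v)
  have hτp : t (m + 1) (u1 * p * v1) = (a : C) * τ := hsP m u v
  have hτn : t (m + 1) (u1 * pi * v1) = ((a⁻¹ : Cˣ) : C) * τ := hsN m u v
  set A2 : C := t (m + 1) (u1 * (p * p) * v1) with hA2def
  set B2 : C := t (m + 1) (u1 * (pi * pi) * v1) with hB2def
  have hq1 := congrArg (fun x => t (m + 1) (u1 * x * v1)) (BMW.sqS_rel (a := a) (z := z) i1)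
  simp only [mul_sub, sub_mul, mul_add, add_mul, mul_smul_comm, smul_mul_assoc, mul_one,
    one_mul, map_add, map_sub, map_smul, smul_eq_mul] at hq1
  rw [hτ0, hτp, hτn, ← hA2def] at hq1
  have hq2 := congrArg (fun x => t (m + 1) (u1 * x * v1)) (BMW.sqSinv_rel (a := a) (z := z) i1)
  simp only [mul_sub, sub_mul, mul_add, add_mul, mul_smul_comm, smul_mul_assoc, mul_one,
    one_mul, map_add, map_sub, map_smul, smul_eq_mul] at hq2
  rw [hτ0, hτp, hτn, ← hB2def] at hq2
  have hA2 : A2 = (d + (z : C) * (a : C) - (z : C) * ((a⁻¹ : Cˣ) : C)) * τ := by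
    linear_combination -hq1 - ((a⁻¹ : Cˣ) : C) * τ * hzd
  have hB2 : B2 = (d + (z : C) * (a : C) - (z : C) * ((a⁻¹ : Cˣ) : C)) * τ := by
    linear_combination hq2 + (a : C) * τ * hzd
  -- level m+2 stabilization instances
  have stP : ∀ x y : BMW C a z (m + 1),
      t (m + 2) (BMW.ιle (Nat.le_succ (m + 1)) x * Q * BMW.ιle (Nat.le_succ (m + 1)) y)
        = (a : C) * t (m + 1) (x * y) := fun x y => hsP (m + 1) x y
  have stN : ∀ x y : BMW C a z (m + 1),
      t (m + 2) (BMW.ιle (Nat.le_succ (m + 1)) x * Qi * BMW.ιle (Nat.le_succ (m + 1)) y)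
        = ((a⁻¹ : Cˣ) : C) * t (m + 1) (x * y) := fun x y => hsN (m + 1) x y
  have stI : ∀ x : BMW C a z (m + 1),
      t (m + 2) (BMW.ιle (Nat.le_succ (m + 1)) x) = d * t (m + 1) x := fun x => hI (m + 1) x
  -- level m+2 basic values
  have hW1 : t (m + 2) (U * V) = d * (d * τ) := by
    rw [hU, hV, ← map_mul, stI, hτ0]
  have hWQ : t (m + 2) (U * Q * V) = (a : C) * (d * τ) := by
    rw [hU, hV, stP u1 v1, hτ0]
  have hWQi : t (m + 2) (U * Qi * V) = ((a⁻¹ : Cˣ) : C) * (d * τ) := by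
    rw [hU, hV, stN u1 v1, hτ0]
  have hqQ := congrArg (fun x => t (m + 2) (U * x * V)) (BMW.sqS_rel (a := a) (z := z) j2)
  simp only [mul_sub, sub_mul, mul_add, add_mul, mul_smul_comm, smul_mul_assoc, mul_one,
    one_mul, map_add, map_sub, map_smul, smul_eq_mul] at hqQ
  rw [hW1, hWQ, hWQi] at hqQ
  have hWQQ : t (m + 2) (U * (Q * Q) * V)
      = d * ((d + (z : C) * (a : C) - (z : C) * ((a⁻¹ : Cˣ) : C)) * τ) := by
    linear_combination -hqQ - ((a⁻¹ : Cˣ) : C) * (d * τ) * hzd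
  have hqQi := congrArg (fun x => t (m + 2) (U * x * V)) (BMW.sqSinv_rel (a := a) (z := z) j2)
  simp only [mul_sub, sub_mul, mul_add, add_mul, mul_smul_comm, smul_mul_assoc, mul_one,
    one_mul, map_add, map_sub, map_smul, smul_eq_mul] at hqQi
  rw [hW1, hWQ, hWQi] at hqQi
  have hWQiQi : t (m + 2) (U * (Qi * Qi) * V)
      = d * ((d + (z : C) * (a : C) - (z : C) * ((a⁻¹ : Cˣ) : C)) * τ) := by
    linear_combination hqQi + (a : C) * (d * τ) * hzd
  -- braided terms
  have hWb : t (m + 2) (U * (P * (Q * P)) * V) = (a : C) * A2 := by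
    have e : U * (P * (Q * P)) * V
        = BMW.ιle (Nat.le_succ (m + 1)) (u1 * p) * Q * BMW.ιle (Nat.le_succ (m + 1)) (p * v1) := by
      rw [map_mul, map_mul, hp, ← hU, ← hV]; noncomm_ring
    rw [e, stP (u1 * p) (p * v1), show (u1 * p) * (p * v1) = u1 * (p * p) * v1 by noncomm_ring]
  have hWpqip : t (m + 2) (U * (P * (Qi * P)) * V) = ((a⁻¹ : Cˣ) : C) * A2 := by
    have e : U * (P * (Qi * P)) * V
        = BMW.ιle (Nat.le_succ (m + 1)) (u1 * p) * Qi * BMW.ιle (Nat.le_succ (m + 1)) (p * v1) := by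
      rw [map_mul, map_mul, hp, ← hU, ← hV]; noncomm_ring
    rw [e, stN (u1 * p) (p * v1), show (u1 * p) * (p * v1) = u1 * (p * p) * v1 by noncomm_ring]
  have hWpqp : t (m + 2) (U * (Pi * (Q * Pi)) * V) = (a : C) * B2 := by
    have e : U * (Pi * (Q * Pi)) * V
        = BMW.ιle (Nat.le_succ (m + 1)) (u1 * pi) * Q
            * BMW.ιle (Nat.le_succ (m + 1)) (pi * v1) := by
      rw [map_mul, map_mul, hpi, ← hU, ← hV]; noncomm_ring
    rw [e, stP (u1 * pi) (pi * v1),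
      show (u1 * pi) * (pi * v1) = u1 * (pi * pi) * v1 by noncomm_ring]
  have hWpiqipi : t (m + 2) (U * (Pi * (Qi * Pi)) * V) = ((a⁻¹ : Cˣ) : C) * B2 := by
    have e : U * (Pi * (Qi * Pi)) * V
        = BMW.ιle (Nat.le_succ (m + 1)) (u1 * pi) * Qi
            * BMW.ιle (Nat.le_succ (m + 1)) (pi * v1) := by
      rw [map_mul, map_mul, hpi, ← hU, ← hV]; noncomm_ring
    rw [e, stN (u1 * pi) (pi * v1),
      show (u1 * pi) * (pi * v1) = u1 * (pi * pi) * v1 by noncomm_ring]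
  have hWpp : t (m + 2) (U * (P * P) * V) = d * A2 := by
    have e : U * (P * P) * V = BMW.ιle (Nat.le_succ (m + 1)) (u1 * (p * p) * v1) := by
      rw [map_mul, map_mul, map_mul, hp, ← hU, ← hV]
    rw [e, stI]
  have hWpipi : t (m + 2) (U * (Pi * Pi) * V) = d * B2 := by
    have e : U * (Pi * Pi) * V = BMW.ιle (Nat.le_succ (m + 1)) (u1 * (pi * pi) * v1) := by
      rw [map_mul, map_mul, map_mul, hpi, ← hU, ← hV]
    rw [e, stI]
  constructor
  · -- positive case
    have hfin := congrArg (fun x => t (m + 2) (U * x * V)) (BMW.hintP (a := a) (z := z) i2 j2 hij2)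
    simp only [mul_sub, sub_mul, mul_add, add_mul, mul_smul_comm, smul_mul_assoc, mul_one,
      one_mul, map_add, map_sub, map_smul, smul_eq_mul] at hfin
    rw [hWb, hWQQ, hWpiqipi, hWpqp, hWpipi] at hfin
    rw [mul_assoc Q Pi Q]
    linear_combination hfin + ((a : C) - ((a⁻¹ : Cˣ) : C)) * hA2
      + (((a⁻¹ : Cˣ) : C) - (a : C) + (z : C) * d) * hB2
  · -- negative case
    have hM := BMW.hintM (a := a) (z := z) i2 j2 hij2
    rw [BMW.e5 (a := a) (z := z) i2 j2 hij2] at hM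
    have hfin2 := congrArg (fun x => t (m + 2) (U * x * V)) hM
    simp only [mul_sub, sub_mul, mul_add, add_mul, mul_smul_comm, smul_mul_assoc, mul_one,
      one_mul, map_add, map_sub, map_smul, smul_eq_mul] at hfin2
    rw [hWpiqipi, hWQiQi, hWpqip, hWb, hWpp] at hfin2
    rw [mul_assoc Qi P Qi]
    linear_combination -hfin2 + (((a⁻¹ : Cˣ) : C) - (a : C)) * hB2
      + ((a : C) - ((a⁻¹ : Cˣ) : C) - (z : C) * d) * hA2

end Aux4
/-- If `(t_n)` satisfies stabilization and inclusion (with `d = δ`),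
then for `ε = ±1` and `u, v ∈ BMW_{n−1}`:
`t_{n+1}(u s_n^ε s_{n−1}^{−ε} s_n^ε v) = a^{−ε} t_n(u s_{n−1}^{2ε} v)`. -/
theorem bmw_stab_incl_zigzag (C : Type) [CommRing C] (a q z : Cˣ)
    (hz : (z : C) = (q : C) - ((q⁻¹ : Cˣ) : C))
    (t : ∀ m : ℕ, BMW C a z m →ₗ[C] C)
    (ht : IsBMWStabIncl a z
      (((a : C) - ((a⁻¹ : Cˣ) : C)) * ((z⁻¹ : Cˣ) : C) + 1) t)
    (ε : ℤ) (hε : ε = 1 ∨ ε = -1) :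
    ∀ (m : ℕ) (u v : BMW C a z m),
      t (m + 2) (BMW.ιle (by omega) u *
          ((BMW.sU (⟨m + 1, by omega⟩ : Fin (m + 2)) ^ ε *
            BMW.sU (⟨m, by omega⟩ : Fin (m + 2)) ^ (-ε) *
            BMW.sU (⟨m + 1, by omega⟩ : Fin (m + 2)) ^ ε :
              (BMW C a z (m + 2))ˣ) : BMW C a z (m + 2)) *
          BMW.ιle (by omega) v)
        = ((a ^ (-ε) : Cˣ) : C) *
            t (m + 1) (BMW.ιle (Nat.le_succ m) u *
              ((BMW.sU (⟨m, by omega⟩ : Fin (m + 1)) ^ (2 * ε) :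
                (BMW C a z (m + 1))ˣ) : BMW C a z (m + 1)) *
              BMW.ιle (Nat.le_succ m) v) := by
  have hzd : (z : C) * (((a : C) - ((a⁻¹ : Cˣ) : C)) * ((z⁻¹ : Cˣ) : C) + 1)
      = (a : C) - ((a⁻¹ : Cˣ) : C) + (z : C) := by
    linear_combination ((a : C) - ((a⁻¹ : Cˣ) : C)) * Units.mul_inv z
  intro m u v
  have haux := bmw_zigzag_aux a z _ hzd t ht m u v
  rcases hε with rfl | rfl
  · simp only [zpow_one, zpow_neg_one, mul_one, zpow_two, Units.val_mul,
      BMW.val_sU, BMW.val_sU_inv]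
    exact haux.1
  · simp only [zpow_neg_one, neg_neg, zpow_one,
      show ((2 : ℤ) * (-1) = -2) from by norm_num, zpow_neg, zpow_two, mul_inv_rev,
      Units.val_mul, BMW.val_sU, BMW.val_sU_inv]
    exact haux.2

end
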